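/- Let μ be a probability distribution on a finite set X, K(y|x) a Markov kernel from X to a finite set Y with μK strictly positive, and K*(x|y) = K(y|x)μ(x)/(μK)(y) the backward channel. For every convex function Φ : [0,∞) → ℝ (extended to positive semidefinite matrices as a standard matrix function) and every function f : X → M_d⁺, one has tr E_{μK}[Φ(K* f)] ≤ tr E_μ[Φ(f)], where (K* f)(y) = Σ_x K*(x|y) f(x). Consequently H_Φ(K* f) ≤ H_Φ(f) since E_{μK}[K* f] = E_μ[f]. -/

import Mathlib

open Matrix Finset
open scoped ComplexOrder

/-- The normalized trace of a complex matrix, as a real number. -/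
noncomputable def trN {d : ℕ} (M : Matrix (Fin d) (Fin d) ℂ) : ℝ :=
  ((d : ℂ)⁻¹ * M.trace).re

variable {X Y : Type} [Fintype X] [Fintype Y]

/-- The output distribution `μK(y) = Σ_x μ(x)·K(y|x)` of a Markov kernel `K`. -/
noncomputable def muK (μ : X → ℝ) (K : X → Y → ℝ) (y : Y) : ℝ :=
  ∑ x, μ x * K x y

/-- The action of the backward channel `K*(x|y) = K(y|x)μ(x)/(μK)(y)` on a matrix-valued
function: `(K* f)(y) = Σ_x K*(x|y)·f(x)`. -/
noncomputable def KstarAct {d : ℕ} (μ : X → ℝ) (K : X → Y → ℝ)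
    (f : X → Matrix (Fin d) (Fin d) ℂ) (y : Y) : Matrix (Fin d) (Fin d) ℂ :=
  ∑ x, (K x y * μ x / muK μ K y) • f x

lemma trN_cfc_eq {d : ℕ} {M : Matrix (Fin d) (Fin d) ℂ} (hM : M.IsHermitian) (Φ : ℝ → ℝ) :
    trN (cfc Φ M) = (d : ℝ)⁻¹ * ∑ j, Φ (hM.eigenvalues j) := by
  rw [hM.cfc_eq, Matrix.IsHermitian.cfc, Unitary.conjStarAlgAut_apply, trN, Matrix.trace_mul_cycle,
    Unitary.coe_star_mul_self, one_mul, Matrix.trace_diagonal]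
  have : ((d : ℂ)⁻¹ * ∑ j, (RCLike.ofReal ∘ Φ ∘ hM.eigenvalues) j)
      = ((((d:ℝ))⁻¹ * ∑ j, Φ (hM.eigenvalues j) : ℝ) : ℂ) := by
    push_cast
    simp [Function.comp]
  rw [this, Complex.ofReal_re]

lemma psd_real_smul {d : ℕ} {A : Matrix (Fin d) (Fin d) ℂ} (hA : A.PosSemidef)
    {c : ℝ} (hc : 0 ≤ c) : (c • A).PosSemidef := by
  have h : c • A = (c : ℂ) • A := by
    ext i j; simp [Complex.real_smul]
  rw [h]
  refine ⟨?_, fun x => ?_⟩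
  · unfold Matrix.IsHermitian
    rw [Matrix.conjTranspose_smul, hA.1.eq]
    norm_num
  · exact (hA.smul (a := (c : ℂ)) (Complex.zero_le_real.mpr hc)).2 x

lemma psd_sum {d : ℕ} {ι : Type} [Fintype ι] {A : ι → Matrix (Fin d) (Fin d) ℂ}
    (hA : ∀ i, (A i).PosSemidef) : (∑ i, A i).PosSemidef := by
  classical
  exact Finset.sum_induction A Matrix.PosSemidef (fun a b ha hb => ha.add hb)
    Matrix.PosSemidef.zero (fun i _ => hA i)

lemma trace_jensen {d : ℕ} {ι : Type} [Fintype ι] (Φ : ℝ → ℝ) (hΦ : ConvexOn ℝ (Set.Ici 0) Φ)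
    (p : ι → ℝ) (hp0 : ∀ i, 0 ≤ p i) (hp1 : ∑ i, p i = 1)
    (A : ι → Matrix (Fin d) (Fin d) ℂ) (hA : ∀ i, (A i).PosSemidef) :
    trN (cfc Φ (∑ i, p i • A i)) ≤ ∑ i, p i * trN (cfc Φ (A i)) := by
  classical
  have hS : (∑ i, p i • A i).PosSemidef := psd_sum (fun i => psd_real_smul (hA i) (hp0 i))
  set M := ∑ i, p i • A i with hMdef
  have hH : M.IsHermitian := hS.1
  set U : Matrix (Fin d) (Fin d) ℂ := (hH.eigenvectorUnitary : Matrix (Fin d) (Fin d) ℂ) with hU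
  set B : ι → Matrix (Fin d) (Fin d) ℂ :=
    fun i => star ((hA i).1.eigenvectorUnitary : Matrix (Fin d) (Fin d) ℂ) * U with hB
  -- B i is unitary
  have hBu : ∀ i, B i ∈ unitary (Matrix (Fin d) (Fin d) ℂ) := fun i =>
    mul_mem (Unitary.star_mem (SetLike.coe_mem _)) (SetLike.coe_mem _)
  -- column sums of |B|^2
  have hcol : ∀ i j, ∑ k, Complex.normSq (B i k j) = 1 := by
    intro i j
    have h1 : (star (B i) * B i) j j = 1 := by
      rw [Unitary.star_mul_self_of_mem (hBu i)]; simp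
    rw [Matrix.mul_apply] at h1
    have h2 : ∀ k, (star (B i)) j k * B i k j = (Complex.normSq (B i k j) : ℂ) := by
      intro k
      rw [Matrix.star_apply, Complex.star_def, Complex.normSq_eq_conj_mul_self]
    rw [Finset.sum_congr rfl (fun k _ => h2 k)] at h1
    exact_mod_cast h1
  have hrow : ∀ i k, ∑ j, Complex.normSq (B i k j) = 1 := by
    intro i k
    have h1 : (B i * star (B i)) k k = 1 := by
      rw [Unitary.mul_star_self_of_mem (hBu i)]; simp
    rw [Matrix.mul_apply] at h1
    have h2 : ∀ j, B i k j * (star (B i)) j k = (Complex.normSq (B i k j) : ℂ) := by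
      intro j
      rw [Matrix.star_apply, Complex.star_def, Complex.mul_conj]
    rw [Finset.sum_congr rfl (fun j _ => h2 j)] at h1
    exact_mod_cast h1
  -- eigenvalue identity
  have key : ∀ j, hH.eigenvalues j
      = ∑ i, p i * ∑ k, Complex.normSq (B i k j) * (hA i).1.eigenvalues k := by
    intro j
    have hdiag : star U * M * U = diagonal (RCLike.ofReal ∘ hH.eigenvalues) := by
      have := hH.conjStarAlgAut_star_eigenvectorUnitary
      rw [Unitary.conjStarAlgAut_apply, Unitary.coe_star, star_star] at this
      exact this
    have hMU : (star U * M * U) j j = (Complex.ofReal (hH.eigenvalues j)) := by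
      rw [hdiag]
      simp [Matrix.diagonal_apply_eq]
    have hexp : star U * M * U = ∑ i, p i • (star U * A i * U) := by
      rw [hMdef, Matrix.mul_sum, Matrix.sum_mul]
      refine Finset.sum_congr rfl fun i _ => ?_
      rw [Matrix.mul_smul, Matrix.smul_mul]
    have hterm : ∀ i, (star U * A i * U) j j
        = ((∑ k, Complex.normSq (B i k j) * (hA i).1.eigenvalues k : ℝ) : ℂ) := by
      intro i
      have hAi : star U * A i * U
          = star (B i) * diagonal (RCLike.ofReal ∘ (hA i).1.eigenvalues) * B i := by
        conv_lhs => rw [(hA i).1.spectral_theorem]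
        rw [hB]
        simp only [Unitary.conjStarAlgAut_apply, StarMul.star_mul, star_star, Matrix.mul_assoc]
      rw [hAi, Matrix.mul_apply]
      simp only [Matrix.mul_diagonal, Matrix.star_apply, Complex.star_def, Function.comp_apply]
      push_cast
      refine Finset.sum_congr rfl fun k _ => ?_
      rw [Complex.normSq_eq_conj_mul_self]
      ring_nf
      exact mul_right_comm _ _ _
    have hfinal : (Complex.ofReal (hH.eigenvalues j))
        = ((∑ i, p i * ∑ k, Complex.normSq (B i k j) * (hA i).1.eigenvalues k : ℝ) : ℂ) := by
      rw [← hMU, hexp, Matrix.sum_apply]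
      push_cast
      refine Finset.sum_congr rfl fun i _ => ?_
      rw [Matrix.smul_apply, hterm i, Complex.real_smul]
      push_cast
      ring
    exact_mod_cast hfinal
  -- Jensen at each eigenvalue of M
  have hjensen : ∀ j, Φ (hH.eigenvalues j)
      ≤ ∑ i, p i * ∑ k, Complex.normSq (B i k j) * Φ ((hA i).1.eigenvalues k) := by
    intro j
    have h := hΦ.map_sum_le (t := (Finset.univ : Finset (ι × Fin d)))
      (w := fun ik => p ik.1 * Complex.normSq (B ik.1 ik.2 j))
      (p := fun ik => (hA ik.1).1.eigenvalues ik.2)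
      (fun ik _ => mul_nonneg (hp0 ik.1) (Complex.normSq_nonneg _))
      (by
        rw [Fintype.sum_prod_type]
        simp only [← Finset.mul_sum]
        rw [Finset.sum_congr rfl (fun i _ => by rw [hcol i j, mul_one])]
        exact hp1)
      (fun ik _ => (hA ik.1).eigenvalues_nonneg ik.2)
    rw [Fintype.sum_prod_type, Fintype.sum_prod_type] at h
    have hc : ∑ i, ∑ k, (p i * Complex.normSq (B i k j)) • (hA i).1.eigenvalues k
        = hH.eigenvalues j := by
      rw [key j]
      refine Finset.sum_congr rfl fun i _ => ?_
      rw [Finset.mul_sum]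
      refine Finset.sum_congr rfl fun k _ => ?_
      simp [smul_eq_mul]; ring
    rw [hc] at h
    refine h.trans_eq ?_
    refine Finset.sum_congr rfl fun i _ => ?_
    rw [Finset.mul_sum]
    refine Finset.sum_congr rfl fun k _ => ?_
    rw [smul_eq_mul]
    ring
  -- put everything together
  rw [trN_cfc_eq hH Φ]
  have hsum : ∑ j, Φ (hH.eigenvalues j) ≤ ∑ i, p i * ∑ k, Φ ((hA i).1.eigenvalues k) := by
    calc ∑ j, Φ (hH.eigenvalues j)
        ≤ ∑ j, ∑ i, p i * ∑ k, Complex.normSq (B i k j) * Φ ((hA i).1.eigenvalues k) :=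
          Finset.sum_le_sum fun j _ => hjensen j
      _ = ∑ i, p i * ∑ k, Φ ((hA i).1.eigenvalues k) := by
          simp only [Finset.mul_sum]
          rw [Finset.sum_comm]
          refine Finset.sum_congr rfl fun i _ => ?_
          rw [Finset.sum_comm]
          refine Finset.sum_congr rfl fun k _ => ?_
          rw [← Finset.mul_sum, ← Finset.sum_mul, hrow i k, one_mul]
  calc (d : ℝ)⁻¹ * ∑ j, Φ (hH.eigenvalues j)
      ≤ (d : ℝ)⁻¹ * ∑ i, p i * ∑ k, Φ ((hA i).1.eigenvalues k) :=
        mul_le_mul_of_nonneg_left hsum (by positivity)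
    _ = ∑ i, p i * trN (cfc Φ (A i)) := by
        rw [Finset.mul_sum]
        refine Finset.sum_congr rfl fun i _ => ?_
        rw [trN_cfc_eq (hA i).1 Φ]
        ring

/-- Jensen-type inequality for backward channels: for `μ` a strictly positive probability
distribution on a finite set `X`, `K` a Markov kernel with `μK` strictly positive, every convex
`Φ : [0,∞) → ℝ` (extended to positive semidefinite matrices as a standard matrix function) and
every `f : X → M_d⁺`, `tr E_{μK}[Φ(K* f)] ≤ tr E_μ[Φ(f)]`; consequently `H_Φ(K* f) ≤ H_Φ(f)`
since `E_{μK}[K* f] = E_μ[f]`. -/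
theorem backward_channel_entropy_contraction {d : ℕ}
    (μ : X → ℝ) (hμpos : ∀ x, 0 < μ x) (hμ1 : ∑ x, μ x = 1)
    (K : X → Y → ℝ) (hK0 : ∀ x y, 0 ≤ K x y) (hK1 : ∀ x, ∑ y, K x y = 1)
    (hμK : ∀ y, 0 < muK μ K y)
    (Φ : ℝ → ℝ) (hΦcont : ContinuousOn Φ (Set.Ici 0)) (hΦconv : ConvexOn ℝ (Set.Ici 0) Φ)
    (f : X → Matrix (Fin d) (Fin d) ℂ) (hf : ∀ x, (f x).PosSemidef) :
    ((∑ y, muK μ K y * trN (cfc Φ (KstarAct μ K f y))) ≤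
        ∑ x, μ x * trN (cfc Φ (f x))) ∧
      ((∑ y, muK μ K y * trN (cfc Φ (KstarAct μ K f y))) -
          trN (cfc Φ (∑ y, muK μ K y • KstarAct μ K f y)) ≤
        (∑ x, μ x * trN (cfc Φ (f x))) - trN (cfc Φ (∑ x, μ x • f x))) := by
  have hq0 : ∀ y x, 0 ≤ K x y * μ x / muK μ K y := fun y x =>
    div_nonneg (mul_nonneg (hK0 x y) (hμpos x).le) (hμK y).le
  have hq1 : ∀ y, ∑ x, K x y * μ x / muK μ K y = 1 := by
    intro y
    rw [← Finset.sum_div, div_eq_one_iff_eq (hμK y).ne']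
    exact Finset.sum_congr rfl fun x _ => mul_comm _ _
  have h1 : ∀ y, trN (cfc Φ (KstarAct μ K f y))
      ≤ ∑ x, (K x y * μ x / muK μ K y) * trN (cfc Φ (f x)) := fun y =>
    trace_jensen Φ hΦconv _ (hq0 y) (hq1 y) f hf
  have main : (∑ y, muK μ K y * trN (cfc Φ (KstarAct μ K f y)))
      ≤ ∑ x, μ x * trN (cfc Φ (f x)) := by
    calc ∑ y, muK μ K y * trN (cfc Φ (KstarAct μ K f y))
        ≤ ∑ y, muK μ K y * ∑ x, (K x y * μ x / muK μ K y) * trN (cfc Φ (f x)) :=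
          Finset.sum_le_sum fun y _ => mul_le_mul_of_nonneg_left (h1 y) (hμK y).le
      _ = ∑ y, ∑ x, K x y * μ x * trN (cfc Φ (f x)) := by
          refine Finset.sum_congr rfl fun y _ => ?_
          rw [Finset.mul_sum]
          refine Finset.sum_congr rfl fun x _ => ?_
          field_simp
          rw [mul_assoc, mul_assoc, mul_div_cancel_left₀ _ (hμK y).ne', mul_assoc]
      _ = ∑ x, μ x * trN (cfc Φ (f x)) := by
          rw [Finset.sum_comm]
          refine Finset.sum_congr rfl fun x _ => ?_
          rw [← Finset.sum_mul, ← Finset.sum_mul, hK1 x, one_mul]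
  have hEq : (∑ y, muK μ K y • KstarAct μ K f y) = ∑ x, μ x • f x := by
    unfold KstarAct
    have h2 : ∀ y, muK μ K y • ∑ x, (K x y * μ x / muK μ K y) • f x
        = ∑ x, (K x y * μ x) • f x := by
      intro y
      rw [Finset.smul_sum]
      refine Finset.sum_congr rfl fun x _ => ?_
      rw [smul_smul, mul_comm, div_mul_cancel₀ _ (hμK y).ne']
    rw [Finset.sum_congr rfl fun y _ => h2 y, Finset.sum_comm]
    refine Finset.sum_congr rfl fun x _ => ?_
    rw [← Finset.sum_smul]
    congr 1
    rw [← Finset.sum_mul, hK1 x, one_mul]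
  exact ⟨main, by rw [hEq]; exact sub_le_sub_right main _⟩
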